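/- For the soft second-price payment rule p_i(b_i,b_{-i}) = b_i - (Σ_j e^{m b_j})/(m e^{m b_i}) · ln( (Σ_j e^{m b_j}) / (1 + Σ_{j≠i} e^{m b_j}) ) with distinct bids where 0 < b_i < max_j b_j, the limit as m → ∞ of p_i(b_i, b_{-i}) equals b_i. -/

import Mathlib

open Finset Filter
set_option maxHeartbeats 1000000

/-- Soft second-price payment rule with parameter `m`. -/
noncomputable def softPay (n : ℕ) (m : ℝ) (b : Fin n → ℝ) (i : Fin n) : ℝ :=
  b i - (∑ j, Real.exp (m * b j)) / (m * Real.exp (m * b i)) *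
    Real.log ((∑ j, Real.exp (m * b j)) /
      (1 + ∑ j ∈ Finset.univ.erase i, Real.exp (m * b j)))

theorem stmt3 (n : ℕ) (hn : 2 ≤ n) (b : Fin n → ℝ)
    (hdist : Function.Injective b) (hb : ∀ j, b j ∈ Set.Ioo (0:ℝ) 1)
    (i : Fin n) (hnotmax : ∃ j, b i < b j) :
    Tendsto (fun m : ℝ => softPay n m b i) atTop (nhds (b i)) := by
  obtain ⟨k, hk⟩ := hnotmax
  have hki : k ≠ i := fun h => by simp [h] at hk
  have hbi : 0 < b i := (hb i).1
  have h0 : Tendsto (fun m : ℝ => (∑ j, Real.exp (m * b j)) / (m * Real.exp (m * b i)) *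
      Real.log ((∑ j, Real.exp (m * b j)) /
        (1 + ∑ j ∈ Finset.univ.erase i, Real.exp (m * b j)))) atTop (nhds 0) := by
    have h2m : Tendsto (fun m : ℝ => 2 / m) atTop (nhds 0) :=
      Tendsto.div_atTop tendsto_const_nhds tendsto_id
    apply tendsto_of_tendsto_of_tendsto_of_le_of_le' (tendsto_const_nhds (x := (0:ℝ))) h2m
    all_goals
      filter_upwards [eventually_ge_atTop (1:ℝ)] with m hm
      set S := ∑ j, Real.exp (m * b j) with hS
      set R := (1 + ∑ j ∈ Finset.univ.erase i, Real.exp (m * b j)) with hR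
      have hmpos : (0:ℝ) < m := lt_of_lt_of_le one_pos hm
      have hEi1 : 1 ≤ Real.exp (m * b i) := Real.one_le_exp (by positivity)
      have hEipos : 0 < Real.exp (m * b i) := Real.exp_pos _
      have hRpos : (0:ℝ) < R := by
        have : 0 ≤ ∑ j ∈ Finset.univ.erase i, Real.exp (m * b j) :=
          Finset.sum_nonneg fun j _ => (Real.exp_pos _).le
        rw [hR]; linarith
      have hsplit : S = Real.exp (m * b i) + (R - 1) := by
        rw [hS, hR, ← Finset.add_sum_erase Finset.univ (fun j => Real.exp (m * b j))
          (Finset.mem_univ i)]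
        ring
      have hEiR : Real.exp (m * b i) ≤ R - 1 := by
        have h1 : Real.exp (m * b i) ≤ Real.exp (m * b k) :=
          Real.exp_le_exp.2 (by nlinarith)
        have h2 : Real.exp (m * b k) ≤ ∑ j ∈ Finset.univ.erase i, Real.exp (m * b j) :=
          Finset.single_le_sum (f := fun j => Real.exp (m * b j)) (fun j _ => (Real.exp_pos _).le)
            (Finset.mem_erase.2 ⟨hki, Finset.mem_univ k⟩)
        rw [hR]; linarith
      have hRS : R ≤ S := by rw [hsplit]; linarith
      have hSpos : 0 < S := lt_of_lt_of_le hRpos hRS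
      have hlog0 : 0 ≤ Real.log (S / R) :=
        Real.log_nonneg ((one_le_div hRpos).2 hRS)
    · exact mul_nonneg (by positivity) hlog0
    · have hlog : Real.log (S / R) ≤ Real.exp (m * b i) / R := by
        refine le_trans (Real.log_le_sub_one_of_pos (div_pos hSpos hRpos)) ?_
        rw [div_sub_one hRpos.ne', div_le_div_iff₀ hRpos hRpos]
        have h1 : S - R ≤ Real.exp (m * b i) := by linarith [hsplit]
        exact mul_le_mul_of_nonneg_right h1 hRpos.le
      have hstep : S / (m * Real.exp (m * b i)) * Real.log (S / R) ≤
          S / (m * Real.exp (m * b i)) * (Real.exp (m * b i) / R) :=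
        mul_le_mul_of_nonneg_left hlog (by positivity)
      refine hstep.trans ?_
      have heq : S / (m * Real.exp (m * b i)) * (Real.exp (m * b i) / R) = S / (m * R) := by
        field_simp
      rw [heq, div_le_div_iff₀ (by positivity) hmpos]
      have hS2R : S ≤ 2 * R := by linarith [hsplit, hEiR]
      have := mul_le_mul_of_nonneg_right hS2R hmpos.le
      linarith
  have := (tendsto_const_nhds (x := b i) (f := (atTop : Filter ℝ))).sub h0
  simpa [softPay] using this
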